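/- arXiv:1202.0842 — 2 statements merged into one kernel-verified Lean document; each statement's English description precedes it below -/
import Mathlib

section
/- Let ε > 0 and suppose g(t) = h(t−ε) for all t ∈ ℝ and μ₁ = μ₃ (so that ν₁ = ν₂). Then C₁₂(Δ, −τ) = C₁₂(Δ, τ+ε) for every Δ > 0 and τ ∈ ℝ. Moreover, for every fixed Δ > 0, C₁₂(Δ, τ) → 0 as τ → ±∞; consequently, in this setting there exist Δ > 0 and τ ≠ 0 with C₁₂(Δ,τ) ≠ C₁₂(Δ,−τ) (a lead-lag effect), unless C₁₂ vanishes identically. -/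
open MeasureTheory Set Filter Topology

noncomputable section

/-- Convolution of two functions on `ℝ` (w.r.t. Lebesgue measure). -/
def conv (f g : ℝ → ℝ) (t : ℝ) : ℝ := ∫ s, f (t - s) * g s

/-- `convPow f n = f^{⋆(n+1)}`, the `(n+1)`-fold convolution power of `f`. -/
def convPow (f : ℝ → ℝ) : ℕ → ℝ → ℝ
  | 0 => f
  | n + 1 => conv f (convPow f n)

/-- `F = Σ_{n ≥ 1} (h⋆g)^{⋆n}`. -/
def Ffun (h g : ℝ → ℝ) (t : ℝ) : ℝ := ∑' n, convPow (conv h g) n t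

/-- `ν₁ = μ₁ + ‖h‖_{L¹} μ₃`. -/
def nu1 (h g : ℝ → ℝ) (μ1 μ3 : ℝ) : ℝ := μ1 + (∫ t, h t) * μ3

/-- `ν₂ = μ₃ + ‖g‖_{L¹} μ₁`. -/
def nu2 (h g : ℝ → ℝ) (μ1 μ3 : ℝ) : ℝ := μ3 + (∫ t, g t) * μ1

/-- The measure `δ₀ + (F + F̌ + F⋆F̌)(t) dt` on `ℝ`. -/
def rhoMeas (h g : ℝ → ℝ) : Measure ℝ :=
  Measure.dirac 0 + volume.withDensity fun t =>
    ENNReal.ofReal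
      (Ffun h g t + Ffun h g (-t) + conv (Ffun h g) (fun s => Ffun h g (-s)) t)

/-- The measure `ν₁ δ₀ + ν₂ (h⋆ȟ)(t) dt` on `ℝ`. -/
def sigMeas11 (h g : ℝ → ℝ) (μ1 μ3 : ℝ) : Measure ℝ :=
  ENNReal.ofReal (nu1 h g μ1 μ3) • Measure.dirac 0 +
    volume.withDensity fun t =>
      ENNReal.ofReal (nu2 h g μ1 μ3 * conv h (fun s => h (-s)) t)

/-- The measure `(ν₂ ȟ + ν₁ g)(t) dt` on `ℝ`. -/
def sigMeas12 (h g : ℝ → ℝ) (μ1 μ3 : ℝ) : Measure ℝ :=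
  volume.withDensity fun t =>
    ENNReal.ofReal (nu2 h g μ1 μ3 * h (-t) + nu1 h g μ1 μ3 * g t)

/-- `γ_Δ(x) = (1 − |x|/Δ)⁺`. -/
def gamDelta (Δ x : ℝ) : ℝ := max (1 - |x| / Δ) 0

/-- `C₁₁(Δ,τ) = (2/(1−‖h‖₁‖g‖₁)) γ_Δ ⋆ (δ₀+F+F̌+F⋆F̌) ⋆ (ν₁δ₀ + ν₂ h⋆ȟ) (τ)`. -/
def C11 (h g : ℝ → ℝ) (μ1 μ3 Δ τ : ℝ) : ℝ :=
  (2 / (1 - (∫ t, h t) * (∫ t, g t))) *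
    ∫ x, (∫ y, gamDelta Δ (τ - x - y) ∂(sigMeas11 h g μ1 μ3)) ∂(rhoMeas h g)

/-- `C₁₂(Δ,τ) = (2/(1−‖h‖₁‖g‖₁)) γ_Δ ⋆ (δ₀+F+F̌+F⋆F̌) ⋆ (ν₂ ȟ + ν₁ g) (τ)`. -/
def C12 (h g : ℝ → ℝ) (μ1 μ3 Δ τ : ℝ) : ℝ :=
  (2 / (1 - (∫ t, h t) * (∫ t, g t))) *
    ∫ x, (∫ y, gamDelta Δ (τ - x - y) ∂(sigMeas12 h g μ1 μ3)) ∂(rhoMeas h g)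

namespace LeadLagAux

lemma conv_measurable {f g : ℝ → ℝ} (hf : Measurable f) (hg : Measurable g) :
    Measurable (conv f g) := by
  have : StronglyMeasurable (fun p : ℝ × ℝ => f (p.1 - p.2) * g p.2) :=
    ((hf.comp (measurable_fst.sub measurable_snd)).mul (hg.comp measurable_snd)).stronglyMeasurable
  exact this.integral_prod_right'.measurable

lemma conv_nonneg' {f g : ℝ → ℝ} (hf : ∀ t, 0 ≤ f t) (hg : ∀ t, 0 ≤ g t) (t : ℝ) :
    0 ≤ conv f g t :=
  integral_nonneg fun s => mul_nonneg (hf _) (hg _)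

lemma ofReal_conv_le {f g : ℝ → ℝ} (hf0 : ∀ t, 0 ≤ f t) (hg0 : ∀ t, 0 ≤ g t) (t : ℝ) :
    ENNReal.ofReal (conv f g t) ≤ ∫⁻ s, ENNReal.ofReal (f (t - s)) * ENNReal.ofReal (g s) := by
  by_cases hI : Integrable (fun s => f (t - s) * g s) volume
  · rw [conv, ofReal_integral_eq_lintegral_ofReal hI
      (ae_of_all _ fun s => mul_nonneg (hf0 _) (hg0 _))]
    exact le_of_eq (lintegral_congr fun s => ENNReal.ofReal_mul (hf0 _))
  · rw [conv, integral_undef hI]; simp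

lemma lintegral_conv_le {f g : ℝ → ℝ} (hf : Measurable f) (hg : Measurable g)
    (hf0 : ∀ t, 0 ≤ f t) (hg0 : ∀ t, 0 ≤ g t) :
    ∫⁻ t, ENNReal.ofReal (conv f g t) ≤
      (∫⁻ t, ENNReal.ofReal (f t)) * ∫⁻ t, ENNReal.ofReal (g t) := by
  calc ∫⁻ t, ENNReal.ofReal (conv f g t)
      ≤ ∫⁻ t, ∫⁻ s, ENNReal.ofReal (f (t - s)) * ENNReal.ofReal (g s) :=
        lintegral_mono fun t => ofReal_conv_le hf0 hg0 t
    _ = ∫⁻ s, ∫⁻ t, ENNReal.ofReal (f (t - s)) * ENNReal.ofReal (g s) := by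
        apply lintegral_lintegral_swap
        exact (((hf.comp (measurable_fst.sub measurable_snd)).ennreal_ofReal).mul
          ((hg.comp measurable_snd).ennreal_ofReal)).aemeasurable
    _ = ∫⁻ s, (∫⁻ t, ENNReal.ofReal (f (t - s))) * ENNReal.ofReal (g s) :=
        lintegral_congr fun s => lintegral_mul_const _
          ((hf.comp (measurable_id.sub measurable_const)).ennreal_ofReal)
    _ = ∫⁻ s, (∫⁻ t, ENNReal.ofReal (f t)) * ENNReal.ofReal (g s) :=
        lintegral_congr fun s => by
          rw [lintegral_sub_right_eq_self (fun t => ENNReal.ofReal (f t)) s]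
    _ = _ := lintegral_const_mul _ hg.ennreal_ofReal

lemma convPow_measurable {f : ℝ → ℝ} (hf : Measurable f) : ∀ n, Measurable (convPow f n)
  | 0 => hf
  | n + 1 => conv_measurable hf (convPow_measurable hf n)

lemma convPow_nonneg {f : ℝ → ℝ} (hf : ∀ t, 0 ≤ f t) : ∀ n t, 0 ≤ convPow f n t
  | 0, t => hf t
  | n + 1, t => conv_nonneg' hf (convPow_nonneg hf n) t

lemma lintegral_convPow_le {f : ℝ → ℝ} (hf : Measurable f) (hf0 : ∀ t, 0 ≤ f t) :
    ∀ n, ∫⁻ t, ENNReal.ofReal (convPow f n t) ≤ (∫⁻ t, ENNReal.ofReal (f t)) ^ (n + 1)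
  | 0 => by simp [convPow]
  | n + 1 => by
    calc ∫⁻ t, ENNReal.ofReal (convPow f (n + 1) t)
        ≤ (∫⁻ t, ENNReal.ofReal (f t)) * ∫⁻ t, ENNReal.ofReal (convPow f n t) :=
          lintegral_conv_le hf (convPow_measurable hf n) hf0 (convPow_nonneg hf0 n)
      _ ≤ (∫⁻ t, ENNReal.ofReal (f t)) * (∫⁻ t, ENNReal.ofReal (f t)) ^ (n + 1) :=
          mul_le_mul_right (lintegral_convPow_le hf hf0 n) _
      _ = (∫⁻ t, ENNReal.ofReal (f t)) ^ (n + 2) := by ring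

lemma Ffun_eq_toReal (h g : ℝ → ℝ) (h0 : ∀ t, 0 ≤ conv h g t) :
    Ffun h g = fun t => (∑' n, ENNReal.ofReal (convPow (conv h g) n t)).toReal := by
  funext t
  have : (∑' n, ENNReal.ofReal (convPow (conv h g) n t)).toReal
      = ∑' n, convPow (conv h g) n t := by
    rw [ENNReal.tsum_toReal_eq fun n => ENNReal.ofReal_ne_top]
    exact tsum_congr fun n => ENNReal.toReal_ofReal (convPow_nonneg h0 n t)
  rw [Ffun, ← this]

lemma Ffun_measurable {h g : ℝ → ℝ} (hm : Measurable (conv h g))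
    (h0 : ∀ t, 0 ≤ conv h g t) : Measurable (Ffun h g) := by
  rw [Ffun_eq_toReal h g h0]
  exact (Measurable.ennreal_tsum fun n => (convPow_measurable hm n).ennreal_ofReal).ennreal_toReal

lemma Ffun_nonneg {h g : ℝ → ℝ} (t : ℝ) (h0 : ∀ t, 0 ≤ conv h g t) : 0 ≤ Ffun h g t :=
  tsum_nonneg fun n => convPow_nonneg h0 n t

lemma lintegral_Ffun_lt_top {h g : ℝ → ℝ} (hm : Measurable (conv h g))
    (h0 : ∀ t, 0 ≤ conv h g t)
    (hI : ∫⁻ t, ENNReal.ofReal (conv h g t) < 1) :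
    ∫⁻ t, ENNReal.ofReal (Ffun h g t) < ⊤ := by
  set I := ∫⁻ t, ENNReal.ofReal (conv h g t) with hIdef
  have hbd : ∀ t, ENNReal.ofReal (Ffun h g t)
      ≤ ∑' n, ENNReal.ofReal (convPow (conv h g) n t) := fun t => by
    rw [Ffun_eq_toReal h g h0]; exact ENNReal.ofReal_toReal_le
  calc ∫⁻ t, ENNReal.ofReal (Ffun h g t)
      ≤ ∫⁻ t, ∑' n, ENNReal.ofReal (convPow (conv h g) n t) := lintegral_mono hbd
    _ = ∑' n, ∫⁻ t, ENNReal.ofReal (convPow (conv h g) n t) :=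
        lintegral_tsum fun n => ((convPow_measurable hm n).ennreal_ofReal).aemeasurable
    _ ≤ ∑' n : ℕ, I ^ n := by
        refine ENNReal.tsum_le_tsum fun n => ?_
        calc ∫⁻ t, ENNReal.ofReal (convPow (conv h g) n t) ≤ I ^ (n + 1) :=
              lintegral_convPow_le hm h0 n
          _ = I ^ n * I := by ring
          _ ≤ I ^ n * 1 := mul_le_mul_right hI.le _
          _ = I ^ n := mul_one _
    _ = (1 - I)⁻¹ := ENNReal.tsum_geometric I
    _ < ⊤ := ENNReal.inv_lt_top.2 (tsub_pos_of_lt hI)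

lemma map_wd (e : ℝ ≃ᵐ ℝ) (hp : MeasurePreserving e volume volume)
    (f : ℝ → ENNReal) :
    (volume.withDensity f).map e = volume.withDensity fun x => f (e.symm x) := by
  ext s hs
  rw [Measure.map_apply e.measurable hs, withDensity_apply _ (e.measurable hs),
    withDensity_apply _ hs]
  have := hp.setLIntegral_comp_preimage_emb e.measurableEmbedding (fun x => f (e.symm x)) s
  simpa using this

lemma gam_nonneg (Δ x : ℝ) : 0 ≤ gamDelta Δ x := le_max_right _ _

lemma gam_le_one {Δ : ℝ} (hΔ : 0 < Δ) (x : ℝ) : gamDelta Δ x ≤ 1 :=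
  max_le (by nlinarith [abs_nonneg x, div_nonneg (abs_nonneg x) hΔ.le]) zero_le_one

lemma gam_even (Δ x : ℝ) : gamDelta Δ (-x) = gamDelta Δ x := by simp [gamDelta]

lemma gam_zero {Δ x : ℝ} (hΔ : 0 < Δ) (hx : Δ ≤ |x|) : gamDelta Δ x = 0 := by
  rw [gamDelta, max_eq_right]
  exact sub_nonpos.2 ((one_le_div hΔ).2 hx)

lemma gam_cont (Δ : ℝ) : Continuous (gamDelta Δ) :=
  ((continuous_const.sub (continuous_abs.div_const Δ)).max continuous_const)

lemma tendsto_inner {σ : Measure ℝ} [IsFiniteMeasure σ] {Δ : ℝ} (hΔ : 0 < Δ)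
    (l : Filter ℝ) [l.IsCountablyGenerated]
    (hl : ∀ y : ℝ, ∀ᶠ u in l, Δ ≤ |u - y|) :
    Tendsto (fun u : ℝ => ∫ y, gamDelta Δ (u - y) ∂σ) l (𝓝 0) := by
  have := tendsto_integral_filter_of_dominated_convergence (μ := σ) (l := l)
    (F := fun u y => gamDelta Δ (u - y)) (f := fun _ => (0 : ℝ)) (bound := fun _ => (1 : ℝ))
    (Eventually.of_forall fun u =>
      (((gam_cont Δ).comp (continuous_const.sub continuous_id)).aestronglyMeasurable))
    (Eventually.of_forall fun u => ae_of_all _ fun y => by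
      rw [Real.norm_of_nonneg (gam_nonneg _ _)]; exact gam_le_one hΔ _)
    (integrable_const 1)
    (ae_of_all _ fun y => by
      refine Tendsto.congr' (l₁ := l) ?_ tendsto_const_nhds
      filter_upwards [hl y] with u hu
      exact (gam_zero hΔ hu).symm)
  simpa using this

lemma tendsto_outer {ρ σ : Measure ℝ} [IsFiniteMeasure ρ] [IsFiniteMeasure σ] {Δ : ℝ}
    (hΔ : 0 < Δ) (l : Filter ℝ) [l.IsCountablyGenerated]
    (hl : ∀ y : ℝ, ∀ᶠ u in l, Δ ≤ |u - y|)
    (hmap : ∀ x : ℝ, Tendsto (fun τ : ℝ => τ - x) l l) :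
    Tendsto (fun τ : ℝ => ∫ x, (∫ y, gamDelta Δ (τ - x - y) ∂σ) ∂ρ) l (𝓝 0) := by
  have hinner := tendsto_inner (σ := σ) hΔ l hl
  have hintg : ∀ u : ℝ, Integrable (fun y => gamDelta Δ (u - y)) σ := fun u =>
    (integrable_const (1 : ℝ)).mono'
      (((gam_cont Δ).comp (continuous_const.sub continuous_id)).aestronglyMeasurable)
      (ae_of_all _ fun y => by
        rw [Real.norm_of_nonneg (gam_nonneg _ _)]; exact gam_le_one hΔ _)
  have := tendsto_integral_filter_of_dominated_convergence (μ := ρ) (l := l)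
    (F := fun τ x => ∫ y, gamDelta Δ (τ - x - y) ∂σ) (f := fun _ => (0 : ℝ))
    (bound := fun _ => (σ univ).toReal)
    (Eventually.of_forall fun τ => by
      have : StronglyMeasurable (fun p : ℝ × ℝ => gamDelta Δ (τ - p.1 - p.2)) :=
        ((gam_cont Δ).comp
          ((continuous_const.sub continuous_fst).sub continuous_snd)).stronglyMeasurable
      exact this.integral_prod_right'.aestronglyMeasurable)
    (Eventually.of_forall fun τ => ae_of_all _ fun x => by
      rw [Real.norm_of_nonneg (integral_nonneg fun y => gam_nonneg _ _)]
      calc ∫ y, gamDelta Δ (τ - x - y) ∂σ ≤ ∫ _, (1 : ℝ) ∂σ :=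
            integral_mono (hintg _) (integrable_const 1) fun y => gam_le_one hΔ _
        _ = (σ univ).toReal := by simp [measureReal_def])
    (integrable_const _)
    (ae_of_all _ fun x => by
      have : (fun τ : ℝ => ∫ y, gamDelta Δ (τ - x - y) ∂σ)
          = (fun u : ℝ => ∫ y, gamDelta Δ (u - y) ∂σ) ∘ fun τ => τ - x := rfl
      rw [this]
      exact hinner.comp (hmap x))
  simpa using this

end LeadLagAux

open LeadLagAux in
/-- **The lead-lag effect.** If `g(t) = h(t−ε)` with `ε > 0` and `μ₁ = μ₃`, then
`C₁₂(Δ,−τ) = C₁₂(Δ,τ+ε)` for all `Δ > 0`, `τ ∈ ℝ`; moreover `C₁₂(Δ,τ) → 0` as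
`τ → ±∞`; consequently, unless `C₁₂` vanishes identically, there exist `Δ > 0` and
`τ ≠ 0` with `C₁₂(Δ,τ) ≠ C₁₂(Δ,−τ)`. -/
theorem lead_lag_effect (h g : ℝ → ℝ)
    (hmeas : Measurable h) (gmeas : Measurable g)
    (hnonneg : ∀ t, 0 ≤ h t) (gnonneg : ∀ t, 0 ≤ g t)
    (hint : Integrable h) (gint : Integrable g)
    (hvan : ∀ t < (0 : ℝ), h t = 0) (gvan : ∀ t < (0 : ℝ), g t = 0)
    (hlt : (∫ t, h t) * (∫ t, g t) < 1)
    (μ1 μ3 : ℝ) (hμ1 : 0 ≤ μ1) (hμ3 : 0 ≤ μ3)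
    (ε : ℝ) (hε : 0 < ε) (hgh : ∀ t, g t = h (t - ε)) (hμ : μ1 = μ3) :
    (∀ Δ : ℝ, 0 < Δ → ∀ τ : ℝ, C12 h g μ1 μ3 Δ (-τ) = C12 h g μ1 μ3 Δ (τ + ε)) ∧
    (∀ Δ : ℝ, 0 < Δ →
      Tendsto (fun τ : ℝ => C12 h g μ1 μ3 Δ τ) atTop (𝓝 0) ∧
      Tendsto (fun τ : ℝ => C12 h g μ1 μ3 Δ τ) atBot (𝓝 0)) ∧
    ((¬ ∀ Δ : ℝ, 0 < Δ → ∀ τ : ℝ, C12 h g μ1 μ3 Δ τ = 0) →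
      ∃ Δ : ℝ, 0 < Δ ∧ ∃ τ : ℝ, τ ≠ 0 ∧
        C12 h g μ1 μ3 Δ τ ≠ C12 h g μ1 μ3 Δ (-τ)) := by
  -- basic facts about conv h g and Ffun
  have hcm : Measurable (conv h g) := conv_measurable hmeas gmeas
  have hc0 : ∀ t, 0 ≤ conv h g t := conv_nonneg' hnonneg gnonneg
  have hIlt : ∫⁻ t, ENNReal.ofReal (conv h g t) < 1 := by
    calc ∫⁻ t, ENNReal.ofReal (conv h g t)
        ≤ (∫⁻ t, ENNReal.ofReal (h t)) * ∫⁻ t, ENNReal.ofReal (g t) :=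
          lintegral_conv_le hmeas gmeas hnonneg gnonneg
      _ = ENNReal.ofReal (∫ t, h t) * ENNReal.ofReal (∫ t, g t) := by
          rw [← ofReal_integral_eq_lintegral_ofReal hint (ae_of_all _ hnonneg),
              ← ofReal_integral_eq_lintegral_ofReal gint (ae_of_all _ gnonneg)]
      _ = ENNReal.ofReal ((∫ t, h t) * ∫ t, g t) :=
          (ENNReal.ofReal_mul (integral_nonneg hnonneg)).symm
      _ < 1 := ENNReal.ofReal_lt_one.2 hlt
  have hFm : Measurable (Ffun h g) := Ffun_measurable hcm hc0
  have hF0 : ∀ t, 0 ≤ Ffun h g t := fun t => Ffun_nonneg t hc0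
  have hFlt : ∫⁻ t, ENNReal.ofReal (Ffun h g t) < ⊤ := lintegral_Ffun_lt_top hcm hc0 hIlt
  have hFnm : Measurable fun t => Ffun h g (-t) := hFm.comp measurable_neg
  have hFn0 : ∀ t : ℝ, 0 ≤ Ffun h g (-t) := fun t => hF0 _
  have hCm : Measurable (conv (Ffun h g) fun s => Ffun h g (-s)) := conv_measurable hFm hFnm
  have hC0 : ∀ t, 0 ≤ conv (Ffun h g) (fun s => Ffun h g (-s)) t := conv_nonneg' hF0 hFn0
  have hFneg_lint : ∫⁻ t, ENNReal.ofReal (Ffun h g (-t)) = ∫⁻ t, ENNReal.ofReal (Ffun h g t) :=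
    (Measure.measurePreserving_neg volume).lintegral_comp hFm.ennreal_ofReal
  have hClt : ∫⁻ t, ENNReal.ofReal (conv (Ffun h g) (fun s => Ffun h g (-s)) t) < ⊤ := by
    calc ∫⁻ t, ENNReal.ofReal (conv (Ffun h g) (fun s => Ffun h g (-s)) t)
        ≤ (∫⁻ t, ENNReal.ofReal (Ffun h g t)) * ∫⁻ t, ENNReal.ofReal (Ffun h g (-t)) :=
          lintegral_conv_le hFm hFnm hF0 hFn0
      _ < ⊤ := by
          rw [hFneg_lint]
          exact ENNReal.mul_lt_top hFlt hFlt
  have hRlt : ∫⁻ t, ENNReal.ofReal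
      (Ffun h g t + Ffun h g (-t) + conv (Ffun h g) (fun s => Ffun h g (-s)) t) < ⊤ := by
    have heq : ∀ t : ℝ, ENNReal.ofReal
        (Ffun h g t + Ffun h g (-t) + conv (Ffun h g) (fun s => Ffun h g (-s)) t)
        = ENNReal.ofReal (Ffun h g t) + ENNReal.ofReal (Ffun h g (-t))
          + ENNReal.ofReal (conv (Ffun h g) (fun s => Ffun h g (-s)) t) := fun t => by
      rw [ENNReal.ofReal_add (add_nonneg (hF0 t) (hFn0 t)) (hC0 t),
        ENNReal.ofReal_add (hF0 t) (hFn0 t)]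
    rw [lintegral_congr heq, lintegral_add_left (show Measurable (fun a => ENNReal.ofReal (Ffun h g a) + ENNReal.ofReal (Ffun h g (-a))) from hFm.ennreal_ofReal.add hFnm.ennreal_ofReal),
      lintegral_add_left hFm.ennreal_ofReal]
    exact ENNReal.add_lt_top.2 ⟨ENNReal.add_lt_top.2 ⟨hFlt, by rwa [hFneg_lint]⟩, hClt⟩
  haveI hρfin : IsFiniteMeasure (rhoMeas h g) := by
    rw [rhoMeas]
    haveI := isFiniteMeasure_withDensity (μ := volume) hRlt.ne
    infer_instance
  haveI hσfin : IsFiniteMeasure (sigMeas12 h g μ1 μ3) := by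
    rw [sigMeas12]
    exact isFiniteMeasure_withDensity_ofReal
      (((hint.comp_neg).const_mul _).add (gint.const_mul _)).hasFiniteIntegral
  -- symmetry of the densities
  have hgint : ∫ t, g t = ∫ t, h t := by
    calc ∫ t, g t = ∫ t, h (t - ε) := by simp only [hgh]
      _ = ∫ t, h t := integral_sub_right_eq_self h ε
  have hnu12 : nu2 h g μ1 μ3 = nu1 h g μ1 μ3 := by rw [nu1, nu2, hgint, hμ]
  have hDsym : ∀ t : ℝ, nu2 h g μ1 μ3 * h (-(ε - t)) + nu1 h g μ1 μ3 * g (ε - t)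
      = nu2 h g μ1 μ3 * h (-t) + nu1 h g μ1 μ3 * g t := by
    intro t
    rw [hgh (ε - t), hgh t, hnu12]
    have e1 : -(ε - t) = t - ε := by ring
    have e2 : ε - t - ε = -t := by ring
    rw [e1, e2]
    ring
  have hσmap : (sigMeas12 h g μ1 μ3).map (fun y => ε - y) = sigMeas12 h g μ1 μ3 := by
    rw [sigMeas12]
    have hmw := map_wd (MeasurableEquiv.subLeft ε) (Measure.measurePreserving_sub_left volume ε)
      (fun t => ENNReal.ofReal (nu2 h g μ1 μ3 * h (-t) + nu1 h g μ1 μ3 * g t))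
    rw [show ⇑(MeasurableEquiv.subLeft ε) = fun y : ℝ => ε - y from rfl] at hmw
    rw [hmw]
    congr 1
    funext x
    have hx : (MeasurableEquiv.subLeft ε).symm x = ε - x := by
      simp [MeasurableEquiv.subLeft, Equiv.subLeft, sub_eq_neg_add]
    rw [hx]
    exact congrArg ENNReal.ofReal (hDsym x)
  have hconvsym : ∀ t : ℝ, conv (Ffun h g) (fun s => Ffun h g (-s)) (-t)
      = conv (Ffun h g) (fun s => Ffun h g (-s)) t := by
    intro t
    have h1 : conv (Ffun h g) (fun s => Ffun h g (-s)) (-t)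
        = ∫ u, Ffun h g u * Ffun h g (u + t) := by
      have hs := integral_sub_left_eq_self (fun u => Ffun h g u * Ffun h g (u + t)) volume (-t)
      simp only [show ∀ s : ℝ, -t - s + t = -s from fun s => by ring] at hs
      rw [conv]
      exact hs
    have h2 : conv (Ffun h g) (fun s => Ffun h g (-s)) t
        = ∫ u, Ffun h g (t + u) * Ffun h g u := by
      have hs := integral_neg_eq_self (fun u => Ffun h g (t + u) * Ffun h g u) volume
      simp only [show ∀ s : ℝ, t + -s = t - s from fun s => by ring] at hs
      rw [conv]
      exact hs
    rw [h1, h2]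
    refine integral_congr_ae (ae_of_all _ fun u => ?_)
    show Ffun h g u * Ffun h g (u + t) = Ffun h g (t + u) * Ffun h g u
    rw [mul_comm, add_comm u t]
  have hRsym : ∀ t : ℝ,
      Ffun h g (-t) + Ffun h g (- -t) + conv (Ffun h g) (fun s => Ffun h g (-s)) (-t)
      = Ffun h g t + Ffun h g (-t) + conv (Ffun h g) (fun s => Ffun h g (-s)) t := by
    intro t
    rw [neg_neg, hconvsym]
    ring
  have hρmap : (rhoMeas h g).map (fun x => -x) = rhoMeas h g := by
    rw [rhoMeas, Measure.map_add _ _ measurable_neg, Measure.map_dirac' measurable_neg 0, neg_zero]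
    congr 1
    have hmw := map_wd (MeasurableEquiv.neg ℝ) (Measure.measurePreserving_neg volume)
      (fun t => ENNReal.ofReal
        (Ffun h g t + Ffun h g (-t) + conv (Ffun h g) (fun s => Ffun h g (-s)) t))
    rw [show ⇑(MeasurableEquiv.neg ℝ) = fun x : ℝ => -x from rfl] at hmw
    rw [hmw]
    congr 1
    funext x
    have hx : (MeasurableEquiv.neg ℝ).symm x = -x := rfl
    rw [hx]
    exact congrArg ENNReal.ofReal (hRsym x)
  -- Part 1
  have part1 : ∀ Δ : ℝ, 0 < Δ → ∀ τ : ℝ,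
      C12 h g μ1 μ3 Δ (-τ) = C12 h g μ1 μ3 Δ (τ + ε) := by
    intro Δ hΔ τ
    rw [C12, C12]
    congr 1
    have hinner : ∀ u : ℝ, (∫ y, gamDelta Δ (u - y) ∂(sigMeas12 h g μ1 μ3))
        = ∫ y, gamDelta Δ (u - (ε - y)) ∂(sigMeas12 h g μ1 μ3) := by
      intro u
      conv_lhs => rw [← hσmap]
      rw [integral_map ((show Measurable (fun y : ℝ => ε - y) from measurable_const.sub measurable_id').aemeasurable)
        (by rw [hσmap]
            exact ((gam_cont Δ).comp (continuous_const.sub continuous_id)).aestronglyMeasurable)]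
    have houter : ∀ (G : ℝ → ℝ), AEStronglyMeasurable G (rhoMeas h g) →
        ∫ x, G x ∂(rhoMeas h g) = ∫ x, G (-x) ∂(rhoMeas h g) := by
      intro G hG
      conv_lhs => rw [← hρmap]
      rw [integral_map measurable_neg.aemeasurable (by rwa [hρmap])]
    calc ∫ x, (∫ y, gamDelta Δ (-τ - x - y) ∂(sigMeas12 h g μ1 μ3)) ∂(rhoMeas h g)
        = ∫ x, (∫ y, gamDelta Δ (-τ - x - (ε - y)) ∂(sigMeas12 h g μ1 μ3)) ∂(rhoMeas h g) :=
          integral_congr_ae (ae_of_all _ fun x => hinner (-τ - x))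
      _ = ∫ x, (∫ y, gamDelta Δ (-τ - -x - (ε - y)) ∂(sigMeas12 h g μ1 μ3)) ∂(rhoMeas h g) := by
          apply houter
          have : StronglyMeasurable (fun p : ℝ × ℝ => gamDelta Δ (-τ - p.1 - (ε - p.2))) :=
            ((gam_cont Δ).comp (((continuous_const.sub continuous_fst)).sub
              (continuous_const.sub continuous_snd))).stronglyMeasurable
          exact this.integral_prod_right'.aestronglyMeasurable
      _ = ∫ x, (∫ y, gamDelta Δ (τ + ε - x - y) ∂(sigMeas12 h g μ1 μ3)) ∂(rhoMeas h g) := by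
          refine integral_congr_ae (ae_of_all _ fun x =>
            integral_congr_ae (ae_of_all _ fun y => ?_))
          show gamDelta Δ (-τ - -x - (ε - y)) = gamDelta Δ (τ + ε - x - y)
          have e : -τ - -x - (ε - y) = -(τ + ε - x - y) := by ring
          rw [e, gam_even]
  -- Part 2
  have part2 : ∀ Δ : ℝ, 0 < Δ →
      Tendsto (fun τ : ℝ => C12 h g μ1 μ3 Δ τ) atTop (𝓝 0) ∧
      Tendsto (fun τ : ℝ => C12 h g μ1 μ3 Δ τ) atBot (𝓝 0) := by
    intro Δ hΔ
    have hlT : ∀ y : ℝ, ∀ᶠ u in (atTop : Filter ℝ), Δ ≤ |u - y| := fun y => by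
      filter_upwards [eventually_ge_atTop (y + Δ)] with u hu
      have : Δ ≤ u - y := by linarith
      exact this.trans (le_abs_self _)
    have hlB : ∀ y : ℝ, ∀ᶠ u in (atBot : Filter ℝ), Δ ≤ |u - y| := fun y => by
      filter_upwards [eventually_le_atBot (y - Δ)] with u hu
      have : Δ ≤ -(u - y) := by linarith
      exact this.trans (neg_le_abs _)
    have hmT : ∀ x : ℝ, Tendsto (fun τ : ℝ => τ - x) atTop atTop := fun x => by
      simpa [sub_eq_add_neg] using tendsto_atTop_add_const_right atTop (-x) (tendsto_id (α := ℝ))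
    have hmB : ∀ x : ℝ, Tendsto (fun τ : ℝ => τ - x) atBot atBot := fun x => by
      simpa [sub_eq_add_neg] using tendsto_atBot_add_const_right atBot (-x) (tendsto_id (α := ℝ))
    constructor
    · have h0 := tendsto_outer (ρ := rhoMeas h g) (σ := sigMeas12 h g μ1 μ3) hΔ atTop hlT hmT
      have h1 := h0.const_mul (2 / (1 - (∫ t, h t) * ∫ t, g t))
      simpa [C12, mul_zero] using h1
    · have h0 := tendsto_outer (ρ := rhoMeas h g) (σ := sigMeas12 h g μ1 μ3) hΔ atBot hlB hmB
      have h1 := h0.const_mul (2 / (1 - (∫ t, h t) * ∫ t, g t))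
      simpa [C12, mul_zero] using h1
  refine ⟨part1, part2, ?_⟩
  -- Part 3
  intro hne
  push_neg at hne
  obtain ⟨Δ, hΔ, τ₀, hτ₀⟩ := hne
  refine ⟨Δ, hΔ, ?_⟩
  by_contra hcon
  push_neg at hcon
  have heven : ∀ τ : ℝ, C12 h g μ1 μ3 Δ τ = C12 h g μ1 μ3 Δ (-τ) := by
    intro τ
    by_cases hτ : τ = 0
    · subst hτ; rw [neg_zero]
    · exact hcon τ hτ
  have hper : ∀ τ : ℝ, C12 h g μ1 μ3 Δ (τ + ε) = C12 h g μ1 μ3 Δ τ :=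
    fun τ => ((part1 Δ hΔ τ).symm).trans (heven τ).symm
  have hseq : ∀ n : ℕ, C12 h g μ1 μ3 Δ (τ₀ + n * ε) = C12 h g μ1 μ3 Δ τ₀ := by
    intro n
    induction n with
    | zero => norm_num
    | succ n ih =>
      have e : τ₀ + ((n : ℝ) + 1) * ε = (τ₀ + n * ε) + ε := by ring
      rw [Nat.cast_succ, e, hper, ih]
  have hT : Tendsto (fun n : ℕ => τ₀ + (n : ℝ) * ε) atTop atTop :=
    tendsto_atTop_add_const_left _ τ₀ (tendsto_natCast_atTop_atTop.atTop_mul_const hε)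
  have ht : Tendsto (fun n : ℕ => C12 h g μ1 μ3 Δ (τ₀ + n * ε)) atTop (𝓝 0) :=
    (part2 Δ hΔ).1.comp hT
  have ht2 : Tendsto (fun n : ℕ => C12 h g μ1 μ3 Δ (τ₀ + n * ε)) atTop
      (𝓝 (C12 h g μ1 μ3 Δ τ₀)) := by
    simp only [hseq]
    exact tendsto_const_nhds
  exact hτ₀ (tendsto_nhds_unique ht2 ht)
end
end

section
/- Let α₁, α₂, β₁, β₂ > 0 with α₁α₂ < β₁β₂, and set h(t) = α₁ e^{−β₁ t} 1_{t≥0}, g(t) = α₂ e^{−β₂ t} 1_{t≥0}, so that ‖h‖_{L¹}‖g‖_{L¹} = α₁α₂/(β₁β₂) < 1. Define ρ₁ = ½(β₁+β₂+√((β₁−β₂)²+4α₁α₂)) and ρ₂ = ½(β₁+β₂−√((β₁−β₂)²+4α₁α₂)). Then 0 < ρ₂ < ρ₁ and F(t) = (α₁α₂/(ρ₁−ρ₂)) (e^{−ρ₂ t} − e^{−ρ₁ t}) 1_{t≥0} for almost every t ∈ ℝ, where F = Σ_{n≥1} (h⋆g)^{⋆n}. -/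
open MeasureTheory Set Filter Topology

noncomputable section

namespace ExpAux

/-- truncated exponential -/
def e (a t : ℝ) : ℝ := if 0 ≤ t then Real.exp (-(a * t)) else 0

/-- truncated `t * exp (-a t)` -/
def te (a t : ℝ) : ℝ := if 0 ≤ t then t * Real.exp (-(a * t)) else 0

lemma e_of_nonneg {a t : ℝ} (ht : 0 ≤ t) : e a t = Real.exp (-(a * t)) := if_pos ht
lemma e_of_neg {a t : ℝ} (ht : t < 0) : e a t = 0 := if_neg (not_le.2 ht)
lemma te_of_nonneg {a t : ℝ} (ht : 0 ≤ t) : te a t = t * Real.exp (-(a * t)) := if_pos ht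
lemma te_of_neg {a t : ℝ} (ht : t < 0) : te a t = 0 := if_neg (not_le.2 ht)

lemma e_nonneg (a t : ℝ) : 0 ≤ e a t := by
  unfold e; split
  · exact (Real.exp_pos _).le
  · exact le_refl 0

lemma e_le_one {a : ℝ} (ha : 0 ≤ a) (t : ℝ) : e a t ≤ 1 := by
  unfold e; split
  · exact Real.exp_le_one_iff.2 (by simp; positivity)
  · exact zero_le_one

lemma te_nonneg (a t : ℝ) : 0 ≤ te a t := by
  unfold te; split
  · have : (0:ℝ) ≤ t := by assumption
    positivity
  · exact le_refl 0

lemma te_le {a : ℝ} (ha : 0 < a) (t : ℝ) : te a t ≤ 1 / a := by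
  unfold te; split
  · have h1 : a * t ≤ Real.exp (a * t) :=
      le_trans (by linarith) (Real.add_one_le_exp (a * t))
    have h2 : Real.exp (-(a * t)) * Real.exp (a * t) = 1 := by
      rw [← Real.exp_add]; simp
    have h5 : a * (t * Real.exp (-(a * t))) ≤ 1 := by
      nlinarith [mul_le_mul_of_nonneg_left h1 (Real.exp_pos (-(a * t))).le]
    rw [le_div_iff₀ ha]
    linarith
  · positivity

lemma measurable_e (a : ℝ) : Measurable (e a) := by
  unfold e
  exact Measurable.ite measurableSet_Ici (by fun_prop) measurable_const

lemma measurable_te (a : ℝ) : Measurable (te a) := by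
  unfold te
  exact Measurable.ite measurableSet_Ici (by fun_prop) measurable_const

/-- The class of measurable nonnegative functions vanishing on negatives, bounded by `M`. -/
structure Nice (M : ℝ) (f : ℝ → ℝ) : Prop where
  meas : Measurable f
  zero : ∀ u, u < 0 → f u = 0
  nonneg : ∀ u, 0 ≤ f u
  bound : ∀ u, f u ≤ M

lemma nice_e {a : ℝ} (ha : 0 ≤ a) : Nice 1 (e a) :=
  ⟨measurable_e a, fun _ h => e_of_neg h, e_nonneg a, e_le_one ha⟩

lemma nice_te {a : ℝ} (ha : 0 < a) : Nice (1 / a) (te a) :=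
  ⟨measurable_te a, fun _ h => te_of_neg h, te_nonneg a, te_le ha⟩

lemma Nice.mono {M M' : ℝ} {f : ℝ → ℝ} (h : Nice M f) (hM : M ≤ M') : Nice M' f :=
  ⟨h.meas, h.zero, h.nonneg, fun u => (h.bound u).trans hM⟩

/-- The convolution kernel integrand is integrable. -/
lemma integrable_mul_kernel {f g : ℝ → ℝ} {Mf Mg : ℝ} (hf : Nice Mf f) (hg : Nice Mg g)
    (t : ℝ) : Integrable (fun s => f (t - s) * g s) := by
  have hmeas : Measurable fun s => f (t - s) * g s :=
    (hf.meas.comp (measurable_const.sub measurable_id)).mul hg.meas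
  have hind : (fun s => f (t - s) * g s) = (Icc 0 t).indicator fun s => f (t - s) * g s := by
    funext s
    by_cases hs : s ∈ Icc 0 t
    · rw [indicator_of_mem hs]
    · rw [indicator_of_notMem hs]
      rw [mem_Icc, not_and_or, not_le, not_le] at hs
      rcases hs with hs | hs
      · rw [hg.zero s hs, mul_zero]
      · rw [hf.zero (t - s) (by linarith), zero_mul]
  rw [hind]
  apply IntegrableOn.integrable_indicator _ measurableSet_Icc
  apply Integrable.mono' (g := fun _ => Mf * Mg)
    (integrableOn_const measure_Icc_lt_top.ne)
    hmeas.aestronglyMeasurable.restrict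
  filter_upwards with s
  rw [Real.norm_eq_abs, abs_of_nonneg (mul_nonneg (hf.nonneg _) (hg.nonneg _))]
  exact mul_le_mul (hf.bound _) (hg.bound _) (hg.nonneg _)
    (le_trans (hf.nonneg (t - s)) (hf.bound (t - s)))

lemma conv_congr_right {f g g' : ℝ → ℝ} (h : ∀ u, g u = g' u) (t : ℝ) :
    conv f g t = conv f g' t := by
  unfold conv
  congr 1
  funext s
  rw [h s]

lemma conv_zero_of_neg {f g : ℝ → ℝ} (hf : ∀ u, u < 0 → f u = 0)
    (hg : ∀ u, u < 0 → g u = 0) {t : ℝ} (ht : t < 0) : conv f g t = 0 := by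
  have : (fun s : ℝ => f (t - s) * g s) = fun _ => 0 := by
    funext s
    rcases lt_or_ge s 0 with hs | hs
    · rw [hg s hs, mul_zero]
    · rw [hf (t - s) (by linarith), zero_mul]
  rw [conv, this, integral_zero]

lemma conv_eq_intervalIntegral {f g : ℝ → ℝ} (hf : ∀ u, u < 0 → f u = 0)
    (hg : ∀ u, u < 0 → g u = 0) {t : ℝ} (ht : 0 ≤ t) :
    conv f g t = ∫ s in (0:ℝ)..t, f (t - s) * g s := by
  rw [conv, intervalIntegral.integral_of_le ht, ← integral_Icc_eq_integral_Ioc]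
  rw [setIntegral_eq_integral_of_forall_compl_eq_zero]
  intro s hs
  rw [mem_Icc, not_and_or, not_le, not_le] at hs
  rcases hs with hs | hs
  · rw [hg s hs, mul_zero]
  · rw [hf (t - s) (by linarith), zero_mul]

/-- `conv` is measurable. -/
lemma measurable_conv {f g : ℝ → ℝ} (hf : Measurable f) (hg : Measurable g) :
    Measurable (conv f g) := by
  have : StronglyMeasurable fun p : ℝ × ℝ => f (p.1 - p.2) * g p.2 :=
    ((hf.comp (measurable_fst.sub measurable_snd)).mul (hg.comp measurable_snd)).stronglyMeasurable
  exact (StronglyMeasurable.integral_prod_right' (f := fun p : ℝ × ℝ => f (p.1 - p.2) * g p.2)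
    this).measurable

lemma conv_nonneg {f g : ℝ → ℝ} (hf : ∀ u, 0 ≤ f u) (hg : ∀ u, 0 ≤ g u) (t : ℝ) :
    0 ≤ conv f g t :=
  integral_nonneg fun s => mul_nonneg (hf _) (hg _)

/-- contraction bound : `conv k f ≤ (∫ k) * Mf`. -/
lemma conv_le {k f : ℝ → ℝ} {Mk Mf : ℝ} (hk : Nice Mk k) (hf : Nice Mf f)
    (hki : Integrable k) (hMf : 0 ≤ Mf) (t : ℝ) :
    conv k f t ≤ (∫ u, k u) * Mf := by
  have h1 : conv k f t ≤ ∫ s, k (t - s) * Mf := by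
    apply integral_mono (integrable_mul_kernel hk hf t)
      ((hki.comp_sub_left t).mul_const Mf)
    intro s
    exact mul_le_mul_of_nonneg_left (hf.bound s) (hk.nonneg _)
  calc conv k f t ≤ ∫ s, k (t - s) * Mf := h1
    _ = (∫ s, k (t - s)) * Mf := by rw [integral_mul_const]
    _ = (∫ u, k u) * Mf := by rw [integral_sub_left_eq_self k volume t]

lemma nice_conv {k f : ℝ → ℝ} {Mk Mf : ℝ} (hk : Nice Mk k) (hf : Nice Mf f)
    (hki : Integrable k) (hMf : 0 ≤ Mf) : Nice ((∫ u, k u) * Mf) (conv k f) :=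
  ⟨measurable_conv hk.meas hf.meas,
   fun u hu => conv_zero_of_neg hk.zero hf.zero hu,
   fun u => conv_nonneg hk.nonneg hf.nonneg u,
   fun u => conv_le hk hf hki hMf u⟩

lemma conv_smul_left (c : ℝ) (f g : ℝ → ℝ) (t : ℝ) :
    conv (fun u => c * f u) g t = c * conv f g t := by
  rw [conv, conv, ← integral_const_mul]
  congr 1; funext s; ring

lemma conv_smul_right (c : ℝ) (f g : ℝ → ℝ) (t : ℝ) :
    conv f (fun u => c * g u) t = c * conv f g t := by
  rw [conv, conv, ← integral_const_mul]
  congr 1; funext s; ring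

lemma conv_sub_right {f g₁ g₂ : ℝ → ℝ} (h₁ : ∀ t, Integrable (fun s => f (t - s) * g₁ s))
    (h₂ : ∀ t, Integrable (fun s => f (t - s) * g₂ s)) (t : ℝ) :
    conv f (fun u => g₁ u - g₂ u) t = conv f g₁ t - conv f g₂ t := by
  rw [conv, conv, conv, ← integral_sub (h₁ t) (h₂ t)]
  congr 1; funext s; ring

lemma conv_add_right {f g₁ g₂ : ℝ → ℝ} (h₁ : ∀ t, Integrable (fun s => f (t - s) * g₁ s))
    (h₂ : ∀ t, Integrable (fun s => f (t - s) * g₂ s)) (t : ℝ) :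
    conv f (fun u => g₁ u + g₂ u) t = conv f g₁ t + conv f g₂ t := by
  rw [conv, conv, conv, ← integral_add (h₁ t) (h₂ t)]
  congr 1; funext s; ring

lemma conv_sub_left {f₁ f₂ g : ℝ → ℝ} (h₁ : ∀ t, Integrable (fun s => f₁ (t - s) * g s))
    (h₂ : ∀ t, Integrable (fun s => f₂ (t - s) * g s)) (t : ℝ) :
    conv (fun u => f₁ u - f₂ u) g t = conv f₁ g t - conv f₂ g t := by
  rw [conv, conv, conv, ← integral_sub (h₁ t) (h₂ t)]
  congr 1; funext s; ring



/-- convolution of two distinct exponentials -/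
lemma conv_e_e {a b : ℝ} (hab : a ≠ b) (t : ℝ) :
    conv (e a) (e b) t = (e b t - e a t) / (a - b) := by
  have hc : a - b ≠ 0 := sub_ne_zero.2 hab
  rcases lt_or_ge t 0 with ht | ht
  · rw [conv_zero_of_neg (fun u hu => e_of_neg hu) (fun u hu => e_of_neg hu) ht,
      e_of_neg ht, e_of_neg ht]
    simp
  · rw [conv_eq_intervalIntegral (fun u hu => e_of_neg hu) (fun u hu => e_of_neg hu) ht]
    have h1 : EqOn (fun s => e a (t - s) * e b s)
        (fun s => Real.exp (-(a * t)) * Real.exp ((a - b) * s)) (uIcc 0 t) := by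
      intro s hs
      rw [uIcc_of_le ht] at hs
      obtain ⟨h0s, hst⟩ := hs
      simp only
      rw [e_of_nonneg (by linarith : (0:ℝ) ≤ t - s), e_of_nonneg h0s, ← Real.exp_add,
        ← Real.exp_add]
      ring_nf
    rw [intervalIntegral.integral_congr h1]
    have key : ∀ s ∈ uIcc 0 t, HasDerivAt
        (fun s => Real.exp (-(a * t)) * Real.exp ((a - b) * s) / (a - b))
        (Real.exp (-(a * t)) * Real.exp ((a - b) * s)) s := by
      intro s _
      have h2 : HasDerivAt (fun s : ℝ => Real.exp ((a - b) * s))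
          (Real.exp ((a - b) * s) * (a - b)) s := by
        simpa using (((hasDerivAt_id s).const_mul (a - b)).exp)
      have := (h2.const_mul (Real.exp (-(a * t)))).div_const (a - b)
      refine this.congr_deriv ?_
      field_simp
    rw [intervalIntegral.integral_eq_sub_of_hasDerivAt key
      (Continuous.intervalIntegrable (by continuity) 0 t)]
    rw [e_of_nonneg ht, e_of_nonneg ht]
    rw [mul_comm, ← Real.exp_add]
    field_simp
    ring_nf
    rw [Real.exp_zero, mul_one]

/-- convolution of an exponential with itself -/
lemma conv_e_e_self (a : ℝ) (t : ℝ) : conv (e a) (e a) t = te a t := by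
  rcases lt_or_ge t 0 with ht | ht
  · rw [conv_zero_of_neg (fun u hu => e_of_neg hu) (fun u hu => e_of_neg hu) ht, te_of_neg ht]
  · rw [conv_eq_intervalIntegral (fun u hu => e_of_neg hu) (fun u hu => e_of_neg hu) ht]
    have h1 : EqOn (fun s => e a (t - s) * e a s)
        (fun _ => Real.exp (-(a * t))) (uIcc 0 t) := by
      intro s hs
      rw [uIcc_of_le ht] at hs
      obtain ⟨h0s, hst⟩ := hs
      simp only
      rw [e_of_nonneg (by linarith : (0:ℝ) ≤ t - s), e_of_nonneg h0s, ← Real.exp_add]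
      ring_nf
    rw [intervalIntegral.integral_congr h1, intervalIntegral.integral_const, te_of_nonneg ht]
    simp [smul_eq_mul]

/-- convolution of `t e^{-at}` with `e^{-bt}`, `a ≠ b` -/
lemma conv_te_e {a b : ℝ} (hab : a ≠ b) (t : ℝ) :
    conv (te a) (e b) t = (e b t - e a t) / (a - b) ^ 2 - te a t / (a - b) := by
  have hc : a - b ≠ 0 := sub_ne_zero.2 hab
  rcases lt_or_ge t 0 with ht | ht
  · rw [conv_zero_of_neg (fun u hu => te_of_neg hu) (fun u hu => e_of_neg hu) ht,
      e_of_neg ht, e_of_neg ht, te_of_neg ht]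
    simp
  · rw [conv_eq_intervalIntegral (fun u hu => te_of_neg hu) (fun u hu => e_of_neg hu) ht]
    have h1 : EqOn (fun s => te a (t - s) * e b s)
        (fun s => Real.exp (-(a * t)) * ((t - s) * Real.exp ((a - b) * s))) (uIcc 0 t) := by
      intro s hs
      rw [uIcc_of_le ht] at hs
      obtain ⟨h0s, hst⟩ := hs
      simp only
      rw [te_of_nonneg (by linarith : (0:ℝ) ≤ t - s), e_of_nonneg h0s]
      rw [mul_assoc, mul_comm (Real.exp _), ← mul_assoc, mul_assoc _ (Real.exp _), ← Real.exp_add]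
      rw [mul_comm (Real.exp (-(a*t))), mul_assoc, ← Real.exp_add]
      ring_nf
    rw [intervalIntegral.integral_congr h1]
    have key : ∀ s ∈ uIcc 0 t, HasDerivAt
        (fun s => Real.exp (-(a * t)) *
          ((t - s) * (Real.exp ((a - b) * s) / (a - b)) + Real.exp ((a - b) * s) / (a - b) / (a - b)))
        (Real.exp (-(a * t)) * ((t - s) * Real.exp ((a - b) * s))) s := by
      intro s _
      have h2 : HasDerivAt (fun s : ℝ => Real.exp ((a - b) * s))
          (Real.exp ((a - b) * s) * (a - b)) s := by
        simpa using (((hasDerivAt_id s).const_mul (a - b)).exp)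
      have h3 : HasDerivAt (fun s : ℝ => t - s) (-1) s := by
        simpa using ((hasDerivAt_id s).const_sub t)
      have h4 := (h3.mul (h2.div_const (a - b))).add ((h2.div_const (a-b)).div_const (a-b))
      have h5 := h4.const_mul (Real.exp (-(a * t)))
      refine h5.congr_deriv ?_
      all_goals (field_simp; try ring)
    rw [intervalIntegral.integral_eq_sub_of_hasDerivAt key
      (Continuous.intervalIntegrable (by continuity) 0 t)]
    have h0 : Real.exp ((a - b) * 0) = 1 := by norm_num
    have hE : Real.exp (-(b * t)) = Real.exp (-(a * t)) * Real.exp ((a - b) * t) := by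
      rw [← Real.exp_add]; ring_nf
    rw [e_of_nonneg ht, e_of_nonneg ht, te_of_nonneg ht, hE, h0]
    field_simp
    ring

lemma e_eq_indicator (a : ℝ) : e a = (Ici (0:ℝ)).indicator fun t => Real.exp (-(a * t)) := by
  funext t
  simp [e, Set.indicator_apply, mem_Ici]

lemma te_eq_indicator (a : ℝ) :
    te a = (Ici (0:ℝ)).indicator fun t => t * Real.exp (-(a * t)) := by
  funext t
  simp [te, Set.indicator_apply, mem_Ici]

lemma integrableOn_exp_Ioi {a : ℝ} (ha : 0 < a) :
    IntegrableOn (fun t : ℝ => Real.exp (-(a * t))) (Ioi 0) := by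
  have := exp_neg_integrableOn_Ioi 0 ha
  simpa [neg_mul] using this

lemma integrable_e {a : ℝ} (ha : 0 < a) : Integrable (e a) := by
  rw [e_eq_indicator]
  rw [integrable_indicator_iff measurableSet_Ici]
  rw [IntegrableOn, Measure.restrict_congr_set Ioi_ae_eq_Ici.symm]
  exact integrableOn_exp_Ioi ha

lemma integrableOn_te_Ioi {a : ℝ} (ha : 0 < a) :
    IntegrableOn (fun t : ℝ => t * Real.exp (-(a * t))) (Ioi 0) := by
  have h2 : IntegrableOn (fun t : ℝ => (2 / a) * Real.exp (-(a / 2 * t))) (Ioi 0) :=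
    (integrableOn_exp_Ioi (by linarith)).const_mul _
  apply Integrable.mono' h2
  · exact (measurable_id.mul (by fun_prop)).aestronglyMeasurable.restrict
  · rw [ae_restrict_iff' measurableSet_Ioi]
    filter_upwards with t ht
    rw [mem_Ioi] at ht
    rw [Real.norm_eq_abs, abs_of_nonneg (by positivity)]
    have h3 : a / 2 * t ≤ Real.exp (a / 2 * t) :=
      le_trans (by linarith) (Real.add_one_le_exp _)
    have h4 : Real.exp (-(a * t)) = Real.exp (-(a / 2 * t)) * Real.exp (-(a / 2 * t)) := by
      rw [← Real.exp_add]; ring_nf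
    rw [h4]
    have h5 : t * Real.exp (-(a / 2 * t)) ≤ 2 / a := by
      have h6 : Real.exp (-(a / 2 * t)) * Real.exp (a / 2 * t) = 1 := by
        rw [← Real.exp_add]; simp
      have h7 : a / 2 * (t * Real.exp (-(a / 2 * t))) ≤ 1 := by
        nlinarith [mul_le_mul_of_nonneg_left h3 (Real.exp_pos (-(a / 2 * t))).le]
      rw [le_div_iff₀ ha]
      nlinarith
    calc t * (Real.exp (-(a / 2 * t)) * Real.exp (-(a / 2 * t)))
        = (t * Real.exp (-(a / 2 * t))) * Real.exp (-(a / 2 * t)) := by ring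
      _ ≤ (2 / a) * Real.exp (-(a / 2 * t)) := by
          apply mul_le_mul_of_nonneg_right h5 (Real.exp_pos _).le
      _ = 2 / a * Real.exp (-(a / 2 * t)) := rfl

lemma integrable_te {a : ℝ} (ha : 0 < a) : Integrable (te a) := by
  rw [te_eq_indicator]
  rw [integrable_indicator_iff measurableSet_Ici]
  rw [IntegrableOn, Measure.restrict_congr_set Ioi_ae_eq_Ici.symm]
  exact integrableOn_te_Ioi ha

lemma integral_e {a : ℝ} (ha : 0 < a) : (∫ t, e a t) = 1 / a := by
  rw [e_eq_indicator, integral_indicator measurableSet_Ici, integral_Ici_eq_integral_Ioi]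
  have key : (∫ t in Ioi (0:ℝ), Real.exp (-(a * t))) = 0 - (-Real.exp (-(a * 0)) / a) := by
    apply integral_Ioi_of_hasDerivAt_of_tendsto (f := fun t => -Real.exp (-(a * t)) / a)
    · exact (Continuous.continuousWithinAt (by continuity))
    · intro x _
      have h2 : HasDerivAt (fun t : ℝ => Real.exp (-(a * t))) (Real.exp (-(a * x)) * (-a)) x := by
        simpa using (((hasDerivAt_id x).const_mul a).neg.exp)
      have := (h2.neg).div_const a
      refine (this.congr_deriv ?_).congr_of_eventuallyEq (Eventually.of_forall fun t => ?_)
      · field_simp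
      · simp [neg_div]
    · exact integrableOn_exp_Ioi ha
    · have hmul : Tendsto (fun x : ℝ => a * x) atTop atTop :=
        Tendsto.const_mul_atTop ha tendsto_id
      have h1 : Tendsto (fun x : ℝ => Real.exp (-(a * x))) atTop (𝓝 0) :=
        Real.tendsto_exp_neg_atTop_nhds_zero.comp hmul
      have := (h1.neg).div_const a
      simpa using this
  rw [key]
  simp [Real.exp_zero, neg_div]
  try ring_nf

lemma integral_te {a : ℝ} (ha : 0 < a) : (∫ t, te a t) = 1 / a ^ 2 := by
  rw [te_eq_indicator, integral_indicator measurableSet_Ici, integral_Ici_eq_integral_Ioi]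
  have key : (∫ t in Ioi (0:ℝ), t * Real.exp (-(a * t)))
      = 0 - (-((0 / a + 1 / a ^ 2) * Real.exp (-(a * 0)))) := by
    apply integral_Ioi_of_hasDerivAt_of_tendsto
      (f := fun t => -((t / a + 1 / a ^ 2) * Real.exp (-(a * t))))
    · exact (Continuous.continuousWithinAt (by continuity))
    · intro x _
      have h2 : HasDerivAt (fun t : ℝ => Real.exp (-(a * t))) (Real.exp (-(a * x)) * (-a)) x := by
        simpa using (((hasDerivAt_id x).const_mul a).neg.exp)
      have h3 : HasDerivAt (fun t : ℝ => t / a + 1 / a ^ 2) (1 / a) x := by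
        exact ((hasDerivAt_id x).div_const a).add_const (1 / a ^ 2)
      have := (h3.mul h2).neg
      convert this using 1
      · rfl
      field_simp
      ring
    · exact integrableOn_te_Ioi ha
    · have h1 : Tendsto (fun x : ℝ => x * Real.exp (-(a * x))) atTop (𝓝 0) := by
        have h0 := (Real.tendsto_pow_mul_exp_neg_atTop_nhds_zero 1).comp
          (Tendsto.const_mul_atTop ha tendsto_id)
        have h0' : Tendsto (fun x : ℝ => (a * x) * Real.exp (-(a * x))) atTop (𝓝 0) := by
          simpa [Function.comp_def] using h0
        have := h0'.const_mul (1 / a)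
        simp only [mul_zero] at this
        apply this.congr
        intro x
        field_simp
      have hmul2 : Tendsto (fun x : ℝ => a * x) atTop atTop :=
        Tendsto.const_mul_atTop ha tendsto_id
      have h2 : Tendsto (fun x : ℝ => Real.exp (-(a * x))) atTop (𝓝 0) :=
        Real.tendsto_exp_neg_atTop_nhds_zero.comp hmul2
      have h3 : Tendsto (fun x : ℝ => -(x / a * Real.exp (-(a * x))
          + 1 / a ^ 2 * Real.exp (-(a * x)))) atTop (𝓝 (-(1 / a * 0 + 1 / a ^ 2 * 0))) := by
        apply Tendsto.neg
        apply Tendsto.add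
        · exact (h1.const_mul (1 / a)).congr fun x => by ring
        · exact h2.const_mul (1 / a ^ 2)
      have h4 : Tendsto (fun x : ℝ => -((x / a + 1 / a ^ 2) * Real.exp (-(a * x)))) atTop
          (𝓝 (-(1 / a * 0 + 1 / a ^ 2 * 0))) := h3.congr fun x => by ring
      simpa using h4
  rw [key]
  simp [Real.exp_zero]

lemma key_alg1 (a b1 b2 r1 r2 E1 E2 R1 R2 : ℝ)
    (hsum : r1 + r2 = b1 + b2) (hprod : r1 * r2 = b1 * b2 - a)
    (hb : b1 ≠ b2) (hr : r1 ≠ r2)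
    (h11 : b1 ≠ r1) (h12 : b1 ≠ r2) (h21 : b2 ≠ r1) (h22 : b2 ≠ r2) :
    a / (r1 - r2) * (R2 - R1)
      = a / (b1 - b2) * (E2 - E1)
      + a / (b1 - b2) * ( (a / (r1 - r2)) * ((R2 - E2) / (b2 - r2) - (R1 - E2) / (b2 - r1))
          - (a / (r1 - r2)) * ((R2 - E1) / (b1 - r2) - (R1 - E1) / (b1 - r1)) ) := by
  have hbne : b1 - b2 ≠ 0 := sub_ne_zero.2 hb
  have hrne : r1 - r2 ≠ 0 := sub_ne_zero.2 hr
  have h11' : b1 - r1 ≠ 0 := sub_ne_zero.2 h11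
  have h12' : b1 - r2 ≠ 0 := sub_ne_zero.2 h12
  have h21' : b2 - r1 ≠ 0 := sub_ne_zero.2 h21
  have h22' : b2 - r2 ≠ 0 := sub_ne_zero.2 h22
  have ha : a = b1 * b2 - r1 * r2 := by linarith
  have hb2 : b2 = r1 + r2 - b1 := by linarith
  subst ha
  subst hb2
  field_simp
  ring

lemma key_alg2 (a b r1 r2 EB TE R1 R2 : ℝ)
    (hsum : r1 + r2 = b + b) (hprod : r1 * r2 = b * b - a)
    (hr : r1 ≠ r2) (h1 : b ≠ r1) (h2 : b ≠ r2) :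
    a / (r1 - r2) * (R2 - R1)
      = a * TE
      + a * ( (a / (r1 - r2)) * ( ((R2 - EB) / (b - r2) ^ 2 - TE / (b - r2))
          - ((R1 - EB) / (b - r1) ^ 2 - TE / (b - r1)) ) ) := by
  have hrne : r1 - r2 ≠ 0 := sub_ne_zero.2 hr
  have h1' : b - r1 ≠ 0 := sub_ne_zero.2 h1
  have h2' : b - r2 ≠ 0 := sub_ne_zero.2 h2
  have hb : b = (r1 + r2) / 2 := by linarith
  subst hb
  have ha : a = (r1 - r2) ^ 2 / 4 := by ring_nf at hprod ⊢; linarith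
  subst ha
  have e1 : (r1 + r2) / 2 - r1 = -((r1 - r2) / 2) := by ring
  have e2 : (r1 + r2) / 2 - r2 = (r1 - r2) / 2 := by ring
  rw [e1, e2]
  have h2' : (r1 - r2) ^ 2 ≠ 0 := pow_ne_zero _ hrne
  have h3' : -r1 + r2 ≠ 0 := by intro hc; apply hrne; linarith
  have h4' : r2 - r1 ≠ 0 := by intro hc; apply hrne; linarith
  have h5' : -(r1 * r2 * 2) + r1 ^ 2 + r2 ^ 2 ≠ 0 := by
    intro hc; apply h2'; nlinarith [hc]
  field_simp
  ring


lemma nice_smul {M c : ℝ} {f : ℝ → ℝ} (hc : 0 ≤ c) (h : Nice M f) :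
    Nice (c * M) (fun u => c * f u) :=
  ⟨h.meas.const_mul c, fun u hu => by rw [h.zero u hu, mul_zero],
   fun u => mul_nonneg hc (h.nonneg u),
   fun u => mul_le_mul_of_nonneg_left (h.bound u) hc⟩

lemma Nice.M_nonneg {M : ℝ} {f : ℝ → ℝ} (h : Nice M f) : 0 ≤ M :=
  le_trans (h.nonneg 0) (h.bound 0)

lemma e_sub_nonneg {a b : ℝ} (hab : a ≤ b) (u : ℝ) : 0 ≤ e a u - e b u := by
  rcases lt_or_ge u 0 with hu | hu
  · rw [e_of_neg hu, e_of_neg hu]; simp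
  · rw [e_of_nonneg hu, e_of_nonneg hu, sub_nonneg]
    apply Real.exp_le_exp.2
    simp only [neg_le_neg_iff]
    exact mul_le_mul_of_nonneg_right hab hu

lemma e_sub_le_one {a b : ℝ} (ha : 0 ≤ a) (u : ℝ) : e a u - e b u ≤ 1 :=
  le_trans (sub_le_self _ (e_nonneg b u)) (e_le_one ha u)

end ExpAux

open ExpAux

/-- Explicit form of `F = Σ_{n≥1} (h⋆g)^{⋆n}` for exponential kernels
`h(t) = α₁ e^{−β₁ t} 1_{t≥0}`, `g(t) = α₂ e^{−β₂ t} 1_{t≥0}` with `α₁α₂ < β₁β₂`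
(so that `‖h‖₁‖g‖₁ = α₁α₂/(β₁β₂) < 1`). -/
theorem exponential_kernel_F (α₁ α₂ β₁ β₂ : ℝ)
    (hα₁ : 0 < α₁) (hα₂ : 0 < α₂) (hβ₁ : 0 < β₁) (hβ₂ : 0 < β₂)
    (hαβ : α₁ * α₂ < β₁ * β₂)
    (h g : ℝ → ℝ)
    (hh : ∀ t, h t = if 0 ≤ t then α₁ * Real.exp (-(β₁ * t)) else 0)
    (hg : ∀ t, g t = if 0 ≤ t then α₂ * Real.exp (-(β₂ * t)) else 0)
    (ρ₁ ρ₂ : ℝ)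
    (hρ₁ : ρ₁ = (β₁ + β₂ + Real.sqrt ((β₁ - β₂) ^ 2 + 4 * (α₁ * α₂))) / 2)
    (hρ₂ : ρ₂ = (β₁ + β₂ - Real.sqrt ((β₁ - β₂) ^ 2 + 4 * (α₁ * α₂))) / 2) :
    (∫ t, h t) * (∫ t, g t) = α₁ * α₂ / (β₁ * β₂) ∧
    0 < ρ₂ ∧ ρ₂ < ρ₁ ∧
    ∀ᵐ t : ℝ, Ffun h g t =
      if 0 ≤ t then
        α₁ * α₂ / (ρ₁ - ρ₂) * (Real.exp (-(ρ₂ * t)) - Real.exp (-(ρ₁ * t)))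
      else 0 := by
  have haa : 0 < α₁ * α₂ := mul_pos hα₁ hα₂
  obtain ⟨s, hs_def⟩ : ∃ s, s = Real.sqrt ((β₁ - β₂) ^ 2 + 4 * (α₁ * α₂)) := ⟨_, rfl⟩
  rw [← hs_def] at hρ₁ hρ₂
  have hDpos : 0 < (β₁ - β₂) ^ 2 + 4 * (α₁ * α₂) := by nlinarith [sq_nonneg (β₁ - β₂)]
  have hs2 : s ^ 2 = (β₁ - β₂) ^ 2 + 4 * (α₁ * α₂) := by
    rw [hs_def]; exact Real.sq_sqrt hDpos.le
  have hspos : 0 < s := by rw [hs_def]; exact Real.sqrt_pos.2 hDpos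
  have hsum : ρ₁ + ρ₂ = β₁ + β₂ := by rw [hρ₁, hρ₂]; ring
  have hprod : ρ₁ * ρ₂ = β₁ * β₂ - α₁ * α₂ := by
    rw [hρ₁, hρ₂]; linear_combination (-(1:ℝ)/4) * hs2
  have hρlt : ρ₂ < ρ₁ := by rw [hρ₁, hρ₂]; linarith
  have hρ₂pos : 0 < ρ₂ := by
    have hslt : s < β₁ + β₂ := by nlinarith [hs2, hspos]
    rw [hρ₂]; linarith
  have hρ₁pos : 0 < ρ₁ := lt_trans hρ₂pos hρlt
  have P2 : (β₁ - ρ₂) * (β₂ - ρ₂) = α₁ * α₂ := by linear_combination -hprod + ρ₂ * hsum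
  have P1 : (ρ₁ - β₁) * (ρ₁ - β₂) = α₁ * α₂ := by linear_combination -hprod + ρ₁ * hsum
  have hb1r2 : ρ₂ < β₁ := by nlinarith [P2, hρlt, haa]
  have hb2r2 : ρ₂ < β₂ := by nlinarith [P2, hρlt, haa]
  have hb1r1 : β₁ < ρ₁ := by nlinarith [P1, hρlt, haa]
  have hb2r1 : β₂ < ρ₁ := by nlinarith [P1, hρlt, haa]
  -- the functions as scaled truncated exponentials
  have hhe : h = fun u => α₁ * e β₁ u := by
    funext u; rw [hh u]; simp only [ExpAux.e]; split <;> simp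
  have hge : g = fun u => α₂ * e β₂ u := by
    funext u; rw [hg u]; simp only [ExpAux.e]; split <;> simp
  have hh_nice : Nice (α₁ * 1) h := by rw [hhe]; exact nice_smul hα₁.le (nice_e hβ₁.le)
  have hg_nice : Nice (α₂ * 1) g := by rw [hge]; exact nice_smul hα₂.le (nice_e hβ₂.le)
  have hh_int : Integrable h := by rw [hhe]; exact (integrable_e hβ₁).const_mul α₁
  -- the candidate limit function
  obtain ⟨Fc, hFc_def⟩ : ∃ F : ℝ → ℝ,
      F = fun u => α₁ * α₂ / (ρ₁ - ρ₂) * (e ρ₂ u - e ρ₁ u) := ⟨_, rfl⟩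
  have hFc_app : ∀ u, Fc u = α₁ * α₂ / (ρ₁ - ρ₂) * (e ρ₂ u - e ρ₁ u) := fun u => by
    rw [hFc_def]
  have hCpos : 0 < α₁ * α₂ / (ρ₁ - ρ₂) := div_pos haa (by linarith)
  have hFc_nice : Nice (α₁ * α₂ / (ρ₁ - ρ₂)) Fc := by
    refine ⟨?_, ?_, ?_, ?_⟩
    · rw [hFc_def]
      exact ((measurable_e ρ₂).sub (measurable_e ρ₁)).const_mul _
    · intro u hu; rw [hFc_app, e_of_neg hu, e_of_neg hu]; ring
    · intro u; rw [hFc_app]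
      exact mul_nonneg hCpos.le (e_sub_nonneg hρlt.le u)
    · intro u; rw [hFc_app]
      calc α₁ * α₂ / (ρ₁ - ρ₂) * (e ρ₂ u - e ρ₁ u)
          ≤ α₁ * α₂ / (ρ₁ - ρ₂) * 1 :=
            mul_le_mul_of_nonneg_left (e_sub_le_one hρ₂pos.le u) hCpos.le
        _ = α₁ * α₂ / (ρ₁ - ρ₂) := mul_one _
  -- the kernel
  obtain ⟨k, hk_def⟩ : ∃ k, k = conv h g := ⟨_, rfl⟩
  have hk_nice : Nice ((∫ u, h u) * (α₂ * 1)) k := by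
    rw [hk_def]; exact nice_conv hh_nice hg_nice hh_int (by positivity)
  -- case split: the key facts about k
  have hBC : Integrable k ∧ ((∫ u, k u) = α₁ * α₂ / (β₁ * β₂)) ∧
      (∀ t, Fc t = k t + conv k Fc t) := by
    by_cases hbb : β₁ = β₂
    · subst hbb
      have hk_app : ∀ u, k u = α₁ * α₂ * te β₁ u := by
        intro u
        rw [hk_def, hhe, hge, conv_smul_left, conv_smul_right, conv_e_e_self]
        ring
      have hk_fun : k = fun u => α₁ * α₂ * te β₁ u := funext hk_app
      refine ⟨?_, ?_, ?_⟩
      · rw [hk_fun]; exact (integrable_te hβ₁).const_mul _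
      · rw [hk_fun, integral_const_mul, integral_te hβ₁]
        field_simp
      · intro t
        have hconv : conv k Fc t = α₁ * α₂ *
            (α₁ * α₂ / (ρ₁ - ρ₂) *
              (((e ρ₂ t - e β₁ t) / (β₁ - ρ₂) ^ 2 - te β₁ t / (β₁ - ρ₂))
              - ((e ρ₁ t - e β₁ t) / (β₁ - ρ₁) ^ 2 - te β₁ t / (β₁ - ρ₁)))) := by
          rw [hk_fun, conv_smul_left, hFc_def, conv_smul_right,
            conv_sub_right (fun t => integrable_mul_kernel (nice_te hβ₁) (nice_e hρ₂pos.le) t)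
              (fun t => integrable_mul_kernel (nice_te hβ₁) (nice_e hρ₁pos.le) t),
            conv_te_e hb1r2.ne' t, conv_te_e hb1r1.ne t]
        rw [hconv, hk_app t, hFc_app t]
        exact key_alg2 (α₁ * α₂) β₁ ρ₁ ρ₂ (e β₁ t) (te β₁ t) (e ρ₁ t) (e ρ₂ t)
          hsum hprod hρlt.ne' hb1r1.ne hb1r2.ne'
    · have hk_app : ∀ u, k u = α₁ * α₂ / (β₁ - β₂) * (e β₂ u - e β₁ u) := by
        intro u
        rw [hk_def, hhe, hge, conv_smul_left, conv_smul_right, conv_e_e hbb]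
        ring
      have hk_fun : k = fun u => α₁ * α₂ / (β₁ - β₂) * (e β₂ u - e β₁ u) := funext hk_app
      refine ⟨?_, ?_, ?_⟩
      · rw [hk_fun]
        exact (((integrable_e hβ₂).sub (integrable_e hβ₁)).const_mul _)
      · rw [hk_fun, integral_const_mul,
          integral_sub (integrable_e hβ₂) (integrable_e hβ₁), integral_e hβ₂, integral_e hβ₁]
        have hbne : β₁ - β₂ ≠ 0 := sub_ne_zero.2 hbb
        field_simp
      · intro t
        have hconv : conv k Fc t = α₁ * α₂ / (β₁ - β₂) *
            ((α₁ * α₂ / (ρ₁ - ρ₂)) *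
              ((e ρ₂ t - e β₂ t) / (β₂ - ρ₂) - (e ρ₁ t - e β₂ t) / (β₂ - ρ₁))
            - (α₁ * α₂ / (ρ₁ - ρ₂)) *
              ((e ρ₂ t - e β₁ t) / (β₁ - ρ₂) - (e ρ₁ t - e β₁ t) / (β₁ - ρ₁))) := by
          rw [hk_fun, conv_smul_left,
            conv_sub_left (fun t => integrable_mul_kernel (nice_e hβ₂.le) hFc_nice t)
              (fun t => integrable_mul_kernel (nice_e hβ₁.le) hFc_nice t),
            hFc_def, conv_smul_right, conv_smul_right,
            conv_sub_right (fun t => integrable_mul_kernel (nice_e hβ₂.le) (nice_e hρ₂pos.le) t)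
              (fun t => integrable_mul_kernel (nice_e hβ₂.le) (nice_e hρ₁pos.le) t),
            conv_sub_right (fun t => integrable_mul_kernel (nice_e hβ₁.le) (nice_e hρ₂pos.le) t)
              (fun t => integrable_mul_kernel (nice_e hβ₁.le) (nice_e hρ₁pos.le) t),
            conv_e_e hb2r2.ne' t, conv_e_e hb2r1.ne t, conv_e_e hb1r2.ne' t,
            conv_e_e hb1r1.ne t]
        rw [hconv, hk_app t, hFc_app t]
        exact key_alg1 (α₁ * α₂) β₁ β₂ ρ₁ ρ₂ (e β₁ t) (e β₂ t) (e ρ₁ t) (e ρ₂ t)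
          hsum hprod hbb hρlt.ne' hb1r1.ne hb1r2.ne' hb2r1.ne hb2r2.ne'
  obtain ⟨hk_int, hk_integral, hkey⟩ := hBC
  -- the convolution powers are nice
  have hPowSucc : ∀ n, convPow k (n + 1) = conv k (convPow k n) := fun n => rfl
  have hPow : ∀ n, ∃ M, Nice M (convPow k n) := by
    intro n
    induction n with
    | zero => exact ⟨_, hk_nice⟩
    | succ n ih =>
      obtain ⟨M, hM⟩ := ih
      rw [hPowSucc n]
      exact ⟨_, nice_conv hk_nice hM hk_int (Nice.M_nonneg hM)⟩
  -- the iteration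
  obtain ⟨T, hT_def⟩ : ∃ T : ℕ → ℝ → ℝ, T = fun n => (conv k)^[n] Fc := ⟨_, rfl⟩
  have hT0 : T 0 = Fc := by rw [hT_def]; rfl
  have hTsucc : ∀ n, T (n + 1) = conv k (T n) := by
    intro n; rw [hT_def]; exact Function.iterate_succ_apply' (conv k) n Fc
  have hr0 : 0 ≤ α₁ * α₂ / (β₁ * β₂) := by positivity
  have hr1 : α₁ * α₂ / (β₁ * β₂) < 1 := (div_lt_one (by positivity)).2 hαβ
  have hTnice : ∀ n, Nice (α₁ * α₂ / (ρ₁ - ρ₂) * (α₁ * α₂ / (β₁ * β₂)) ^ n) (T n) := by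
    intro n
    induction n with
    | zero => rw [hT0]; simpa using hFc_nice
    | succ n ih =>
      rw [hTsucc n]
      have h2 := nice_conv hk_nice ih hk_int (Nice.M_nonneg ih)
      have h3 : (∫ u, k u) * (α₁ * α₂ / (ρ₁ - ρ₂) * (α₁ * α₂ / (β₁ * β₂)) ^ n)
          = α₁ * α₂ / (ρ₁ - ρ₂) * (α₁ * α₂ / (β₁ * β₂)) ^ (n + 1) := by
        rw [hk_integral]; ring
      rwa [h3] at h2
  have hstep : ∀ n, ∀ t, T n t = convPow k n t + T (n + 1) t := by
    intro n
    induction n with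
    | zero => intro t; rw [hT0, hTsucc 0, hT0]; exact hkey t
    | succ n ih =>
      intro t
      obtain ⟨Mp, hMp⟩ := hPow n
      calc T (n + 1) t = conv k (T n) t := by rw [hTsucc n]
        _ = conv k (fun u => convPow k n u + T (n + 1) u) t :=
            conv_congr_right ih t
        _ = conv k (convPow k n) t + conv k (T (n + 1)) t :=
            conv_add_right (fun t => integrable_mul_kernel hk_nice hMp t)
              (fun t => integrable_mul_kernel hk_nice (hTnice (n + 1)) t) t
        _ = convPow k (n + 1) t + T (n + 2) t := by rw [hPowSucc n, hTsucc (n + 1)]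
  have hpartial : ∀ n, ∀ t, Fc t = (∑ m ∈ Finset.range n, convPow k m t) + T n t := by
    intro n
    induction n with
    | zero => intro t; simp [hT0]
    | succ n ih =>
      intro t
      rw [Finset.sum_range_succ]
      have h4 := ih t
      have h5 := hstep n t
      linarith
  -- pointwise convergence of the series to Fc
  have hFfun : ∀ t, Ffun h g t = Fc t := by
    intro t
    have hnn : ∀ m, 0 ≤ convPow k m t := fun m => (hPow m).choose_spec.nonneg t
    have hble : ∀ n, ∑ m ∈ Finset.range n, convPow k m t ≤ α₁ * α₂ / (ρ₁ - ρ₂) := by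
      intro n
      have h4 := hpartial n t
      have h5 := (hTnice n).nonneg t
      have h6 := hFc_nice.bound t
      linarith
    have hsummable : Summable fun m => convPow k m t := summable_of_sum_range_le hnn hble
    have htendT : Tendsto (fun n => T n t) atTop (𝓝 0) := by
      apply squeeze_zero (fun n => (hTnice n).nonneg t) (fun n => (hTnice n).bound t)
      have := (tendsto_pow_atTop_nhds_zero_of_lt_one hr0 hr1).const_mul (α₁ * α₂ / (ρ₁ - ρ₂))
      simpa using this
    have htends : Tendsto (fun n => ∑ m ∈ Finset.range n, convPow k m t) atTop (𝓝 (Fc t)) := by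
      have h7 : Tendsto (fun n => Fc t - T n t) atTop (𝓝 (Fc t - 0)) :=
        tendsto_const_nhds.sub htendT
      rw [sub_zero] at h7
      apply h7.congr
      intro n
      have := hpartial n t
      linarith
    have h8 : Ffun h g t = ∑' m, convPow k m t := by rw [Ffun, ← hk_def]
    rw [h8]
    exact tendsto_nhds_unique hsummable.hasSum.tendsto_sum_nat htends
  refine ⟨?_, hρ₂pos, hρlt, ?_⟩
  · have h9 : (∫ t, h t) = α₁ * (1 / β₁) := by rw [hhe, integral_const_mul, integral_e hβ₁]
    have h10 : (∫ t, g t) = α₂ * (1 / β₂) := by rw [hge, integral_const_mul, integral_e hβ₂]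
    rw [h9, h10]
    field_simp
    try ring
  · apply Eventually.of_forall
    intro t
    rw [hFfun t, hFc_app t]
    by_cases ht : 0 ≤ t
    · rw [if_pos ht, e_of_nonneg ht, e_of_nonneg ht]
    · rw [if_neg ht, e_of_neg (not_le.1 ht), e_of_neg (not_le.1 ht)]
      try ring
end
end
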